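/- Let A, E be real n×n matrices such that the pencil A − sE is admissible. Then for every B ∈ ℝ^{n×m}, C ∈ ℝ^{p×n} and D ∈ ℝ^{p×m}, the transfer function matrix C(sE − A)^{−1}B + D (a p×m matrix over the field ℝ(s) of real rational functions) is stable; in particular every entry is proper and all of its poles lie in the open left half-plane. -/

import Mathlib

open Matrix Polynomial
open scoped Kronecker

set_option synthInstance.maxHeartbeats 400000
set_option maxHeartbeats 1000000

noncomputable section

/-- The field ℝ(s) of real rational functions. -/
abbrev RF := RatFunc ℝ

/-- A rational function is proper if the degree of its numerator (in lowest terms)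
is at most the degree of its denominator. -/
def RFproper (f : RF) : Prop := f.num.degree ≤ f.denom.degree

/-- A rational function is stable: proper and every complex root of its denominator
has strictly negative real part. -/
def RFstable (f : RF) : Prop :=
  RFproper f ∧ ∀ z : ℂ, Polynomial.aeval z f.denom = 0 → z.re < 0

/-- A rational matrix is stable (lies in RH∞) iff every entry is stable. -/
def MStable {p m : Type*} (G : Matrix p m RF) : Prop := ∀ i j, RFstable (G i j)

/-- A real matrix viewed as a matrix over ℝ(s). -/
def toRF {p m : Type*} (M : Matrix p m ℝ) : Matrix p m RF := M.map (algebraMap ℝ RF)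

/-- A real matrix viewed as a matrix over ℂ. -/
def toC {p m : Type*} (M : Matrix p m ℝ) : Matrix p m ℂ := M.map (fun x => (x : ℂ))

/-- The pencil A - s E as a matrix over ℝ(s). -/
def pencilRF {n : Type*} (A E : Matrix n n ℝ) : Matrix n n RF :=
  toRF A - (RatFunc.X : RF) • toRF E

/-- Admissible pencil: regular, every finite generalized eigenvalue in the open left
half-plane, and deg det(sE - A) = rank E (all infinite generalized eigenvalues have
partial multiplicity at most 1). -/
def Admissible {n : Type*} [Fintype n] [DecidableEq n] (A E : Matrix n n ℝ) : Prop :=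
  (pencilRF A E).det ≠ 0 ∧
  (∀ z : ℂ, (toC A - z • toC E).det = 0 → z.re < 0) ∧
  (Matrix.of fun i j => Polynomial.X * Polynomial.C (E i j) - Polynomial.C (A i j)).det.natDegree
    = E.rank

/-- Transfer function matrix C (sE - A)⁻¹ B + D of a descriptor realization. -/
def tfm {n p m : Type*} [Fintype n] [DecidableEq n] (E A : Matrix n n ℝ)
    (B : Matrix n m ℝ) (C : Matrix p n ℝ) (D : Matrix p m ℝ) : Matrix p m RF :=
  toRF C * ((RatFunc.X : RF) • toRF E - toRF A)⁻¹ * toRF B + toRF D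

/-- If more columns than the rank are taken from `E`, the mixed determinant vanishes. -/
lemma det_mix_eq_zero {n : ℕ} (E A : Matrix (Fin n) (Fin n) ℝ) (S : Finset (Fin n))
    (hS : E.rank < S.card) :
    (Matrix.of fun i j => if j ∈ S then E i j else A i j).det = 0 := by
  classical
  -- the columns of `E` indexed by `S` are linearly dependent
  have hdep : ¬ LinearIndependent ℝ (fun j : S => Eᵀ (j : Fin n)) := by
    intro h
    have hW : ∀ j : S, Eᵀ (j : Fin n) ∈ Submodule.span ℝ (Set.range Eᵀ) :=
      fun j => Submodule.subset_span ⟨j, rfl⟩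
    have h' : LinearIndependent ℝ (fun j : S =>
        (⟨Eᵀ (j : Fin n), hW j⟩ : Submodule.span ℝ (Set.range Eᵀ))) := by
      apply LinearIndependent.of_comp (Submodule.span ℝ (Set.range Eᵀ)).subtype
      exact h
    have := h'.fintype_card_le_finrank
    rw [Fintype.card_coe] at this
    rw [Matrix.rank_eq_finrank_span_cols] at hS
    have hS' : Module.finrank ℝ (Submodule.span ℝ (Set.range Eᵀ)) < S.card := hS
    omega
  rw [Fintype.not_linearIndependent_iff] at hdep
  obtain ⟨g, hg, j₀, hj₀⟩ := hdep
  set v : Fin n → ℝ := fun j => if h : j ∈ S then g ⟨j, h⟩ else 0 with hv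
  have hvne : v ≠ 0 := by
    intro h0
    apply hj₀
    have := congrFun h0 (j₀ : Fin n)
    simpa [hv, j₀.2] using this
  have hmv : (Matrix.of fun i j => if j ∈ S then E i j else A i j).mulVec v = 0 := by
    funext i
    have hgi := congrFun hg i
    simp only [Finset.sum_apply, Pi.smul_apply, smul_eq_mul, Pi.zero_apply,
      Matrix.transpose_apply] at hgi
    calc (Matrix.of fun i j => if j ∈ S then E i j else A i j).mulVec v i
        = ∑ j, (if j ∈ S then E i j else A i j) * v j := by
          simp [Matrix.mulVec, dotProduct]
      _ = ∑ j ∈ S, (if j ∈ S then E i j else A i j) * v j := by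
          refine (Finset.sum_subset S.subset_univ ?_).symm
          intro j _ hjS
          simp [hv, hjS]
      _ = ∑ j ∈ S, E i j * v j := by
          refine Finset.sum_congr rfl fun j hj => by rw [if_pos hj]
      _ = ∑ j : S, E i (j : Fin n) * g j := by
          rw [← Finset.sum_coe_sort]
          refine Finset.sum_congr rfl fun j _ => by simp [hv, j.2]
      _ = 0 := by
          rw [← hgi]; exact Finset.sum_congr rfl fun j _ => mul_comm _ _
  exact Matrix.exists_mulVec_eq_zero_iff.mp ⟨v, hvne, hmv⟩

lemma det_linear_expand {n : ℕ} (E A : Matrix (Fin n) (Fin n) ℝ) :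
    (Matrix.of fun i j => X * Polynomial.C (E i j) + Polynomial.C (A i j)).det =
    ∑ T ∈ Finset.univ.powerset, X ^ T.card *
      Polynomial.C ((Matrix.of fun i j => if j ∈ T then E i j else A i j).det) := by
  classical
  rw [Matrix.det_apply']
  have key : ∀ σ : Equiv.Perm (Fin n),
      (∏ i, (Matrix.of fun i j => X * Polynomial.C (E i j) + Polynomial.C (A i j)) (σ i) i) =
      ∑ T ∈ Finset.univ.powerset, X ^ T.card *
        Polynomial.C ((∏ i ∈ T, E (σ i) i) * ∏ i ∈ Finset.univ \ T, A (σ i) i) := by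
    intro σ
    simp only [Matrix.of_apply]
    rw [Finset.prod_add]
    refine Finset.sum_congr rfl fun T hT => ?_
    rw [Finset.prod_mul_distrib, Finset.prod_const, _root_.map_mul, map_prod, map_prod]
    ring
  simp only [key, Finset.mul_sum]
  rw [Finset.sum_comm]
  refine Finset.sum_congr rfl fun T hT => ?_
  rw [Matrix.det_apply', map_sum, Finset.mul_sum]
  refine Finset.sum_congr rfl fun σ _ => ?_
  have hprod : (∏ i, (Matrix.of fun i j => if j ∈ T then E i j else A i j) (σ i) i)
      = (∏ i ∈ T, E (σ i) i) * ∏ i ∈ Finset.univ \ T, A (σ i) i := by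
    rw [← Finset.prod_sdiff (Finset.subset_univ T), mul_comm]
    simp only [Matrix.of_apply]
    congr 1
    · exact Finset.prod_congr rfl fun i hi => if_pos hi
    · exact Finset.prod_congr rfl fun i hi => if_neg (Finset.mem_sdiff.mp hi).2
  rw [hprod]; simp only [_root_.map_mul, map_intCast]
  ring

lemma degree_det_linear_le {n : ℕ} (E A : Matrix (Fin n) (Fin n) ℝ) :
    (Matrix.of fun i j => X * Polynomial.C (E i j) + Polynomial.C (A i j)).det.degree
      ≤ (E.rank : WithBot ℕ) := by
  classical
  rw [det_linear_expand]
  refine (Polynomial.degree_sum_le _ _).trans ?_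
  rw [Finset.sup_le_iff]
  intro T _
  by_cases h : E.rank < T.card
  · rw [det_mix_eq_zero E A T h, map_zero, mul_zero, Polynomial.degree_zero]
    exact bot_le
  · push_neg at h
    refine (Polynomial.degree_mul_le _ _).trans ?_
    refine le_trans (add_le_add (Polynomial.degree_X_pow_le _) Polynomial.degree_C_le) ?_
    rw [add_zero]
    exact_mod_cast h

lemma rank_updateRow_zero_le {n : ℕ} (E : Matrix (Fin n) (Fin n) ℝ) (k : Fin n) :
    (E.updateRow k 0).rank ≤ E.rank := by
  classical
  rw [Matrix.rank_eq_finrank_span_row, Matrix.rank_eq_finrank_span_row]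
  apply Submodule.finrank_mono
  rw [Submodule.span_le]
  rintro x ⟨i, rfl⟩
  by_cases hi : i = k
  · subst hi
    show (E.updateRow i 0) i ∈ _
    rw [Matrix.updateRow_self]
    exact Submodule.zero_mem _
  · show (E.updateRow k 0) i ∈ _
    rw [Matrix.updateRow_ne hi]
    exact Submodule.subset_span ⟨i, rfl⟩

/-- Degree of each adjugate entry of the pencil is at most `E.rank`. -/
lemma degree_adjugate_le {n : ℕ} (E A : Matrix (Fin n) (Fin n) ℝ) (l k : Fin n) :
    ((Matrix.of fun i j => X * Polynomial.C (E i j) - Polynomial.C (A i j)).adjugate l k).degree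
      ≤ (E.rank : WithBot ℕ) := by
  classical
  rw [Matrix.adjugate_apply]
  have hmat : (Matrix.of fun i j => X * Polynomial.C (E i j) - Polynomial.C (A i j)).updateRow k
        (Pi.single l 1) =
      Matrix.of fun i j => X * Polynomial.C ((E.updateRow k 0) i j) +
        Polynomial.C (((-A).updateRow k (Pi.single l 1)) i j) := by
    ext i j
    by_cases hi : i = k
    · subst hi
      simp [Matrix.updateRow_self, Pi.single_apply, apply_ite Polynomial.C]
    · simp [Matrix.updateRow_ne hi, sub_eq_add_neg]
  rw [hmat]
  exact (degree_det_linear_le _ _).trans (by exact_mod_cast rank_updateRow_zero_le E k)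

lemma stable_of_div (p q : ℝ[X]) (hq : q ≠ 0) (hdeg : p.degree ≤ q.degree)
    (hroots : ∀ z : ℂ, Polynomial.aeval z q = 0 → z.re < 0) :
    RFstable (algebraMap ℝ[X] RF p / algebraMap ℝ[X] RF q) := by
  set f : RF := algebraMap ℝ[X] RF p / algebraMap ℝ[X] RF q with hf
  by_cases hp : p = 0
  · subst hp
    simp only [map_zero, zero_div, hf]
    constructor
    · simp [RFproper]
    · intro z hz
      simp at hz
  have hfne : f ≠ 0 := by
    rw [hf]
    exact div_ne_zero (RatFunc.algebraMap_ne_zero hp) (RatFunc.algebraMap_ne_zero hq)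
  constructor
  · -- properness
    have hcross : f.num * q = p * f.denom := by
      have h1 : (algebraMap ℝ[X] RF f.num) / (algebraMap ℝ[X] RF f.denom)
          = (algebraMap ℝ[X] RF p) / (algebraMap ℝ[X] RF q) :=
        (RatFunc.num_div_denom f).trans hf
      rw [div_eq_div_iff (RatFunc.algebraMap_ne_zero f.denom_ne_zero)
        (RatFunc.algebraMap_ne_zero hq)] at h1
      rw [← _root_.map_mul, ← _root_.map_mul] at h1
      exact RatFunc.algebraMap_injective ℝ h1
    have hnum : f.num ≠ 0 := RatFunc.num_ne_zero hfne
    have hpq : p.natDegree ≤ q.natDegree := Polynomial.natDegree_le_natDegree hdeg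
    have hd : f.num.natDegree + q.natDegree = p.natDegree + f.denom.natDegree := by
      have := congrArg Polynomial.natDegree hcross
      rwa [Polynomial.natDegree_mul hnum hq, Polynomial.natDegree_mul hp f.denom_ne_zero]
        at this
    have hnd : f.num.natDegree ≤ f.denom.natDegree := by omega
    show f.num.degree ≤ f.denom.degree
    rw [Polynomial.degree_eq_natDegree hnum,
      Polynomial.degree_eq_natDegree f.denom_ne_zero]
    exact_mod_cast hnd
  · -- poles
    intro z hz
    have hdvd : f.denom ∣ q := (RatFunc.denom_dvd hq).mpr ⟨p, hf⟩
    obtain ⟨t, ht⟩ := hdvd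
    apply hroots z
    rw [ht, _root_.map_mul, hz, zero_mul]

/-- if the pencil A - sE is admissible then the transfer function matrix
C (sE - A)⁻¹ B + D is stable: every entry is proper and all of its poles lie in the
open left half-plane. -/
theorem stmt_0 {n m p : ℕ} (A E : Matrix (Fin n) (Fin n) ℝ) (hAE : Admissible A E)
    (B : Matrix (Fin n) (Fin m) ℝ) (C : Matrix (Fin p) (Fin n) ℝ)
    (D : Matrix (Fin p) (Fin m) ℝ) :
    MStable (tfm E A B C D) := by
  classical
  set Mp : Matrix (Fin n) (Fin n) ℝ[X] :=
    Matrix.of fun i j => X * Polynomial.C (E i j) - Polynomial.C (A i j) with hMp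
  set P : ℝ[X] := Mp.det with hPdef
  -- the pencil over RF is the image of Mp
  have hMmap : (RatFunc.X : RF) • toRF E - toRF A = Mp.map (algebraMap ℝ[X] RF) := by
    ext i j
    simp [toRF, hMp, Matrix.map_apply, Matrix.sub_apply, Matrix.smul_apply, map_sub,
      _root_.map_mul, RatFunc.algebraMap_C, RatFunc.algebraMap_X, RatFunc.algebraMap_eq_C,
      smul_eq_mul]
    ring
  -- P is nonzero
  have hpencil : pencilRF A E = -(Mp.map (algebraMap ℝ[X] RF)) := by
    rw [← hMmap]; unfold pencilRF; rw [neg_sub]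
  have hP0 : P ≠ 0 := by
    intro h
    apply hAE.1
    rw [hpencil, Matrix.det_neg, ← RingHom.mapMatrix_apply, ← RingHom.map_det, ← hPdef, h,
      map_zero, mul_zero]
  have hPRF : algebraMap ℝ[X] RF P ≠ 0 := RatFunc.algebraMap_ne_zero hP0
  -- degree of P
  have hPdeg : P.degree = (E.rank : WithBot ℕ) := by
    rw [Polynomial.degree_eq_natDegree hP0]
    have h := hAE.2.2
    rw [← hMp, ← hPdef] at h
    exact_mod_cast h
  -- roots of P
  have hProots : ∀ z : ℂ, Polynomial.aeval z P = 0 → z.re < 0 := by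
    intro z hz
    apply hAE.2.1 z
    have h1 : (toC A - z • toC E) = -(Mp.map (Polynomial.aeval z)) := by
      ext i j
      simp [toC, hMp, Matrix.map_apply, Matrix.sub_apply, Matrix.smul_apply, map_sub,
        _root_.map_mul, Polynomial.aeval_X, Polynomial.aeval_C, smul_eq_mul,
        Algebra.algebraMap_eq_smul_one]
      ring
    rw [h1, Matrix.det_neg]
    have h2 : (Mp.map (Polynomial.aeval z)).det = 0 := by
      have h3 := RingHom.map_det ((Polynomial.aeval z : ℝ[X] →ₐ[ℝ] ℂ) : ℝ[X] →+* ℂ) Mp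
      simp only [RingHom.mapMatrix_apply, AlgHom.coe_toRingHom] at h3
      rw [← h3, ← hPdef]
      exact hz
    rw [h2, mul_zero]
  -- invertibility
  have hunit : IsUnit (Mp.map (algebraMap ℝ[X] RF)).det := by
    rw [← RingHom.mapMatrix_apply, ← RingHom.map_det]
    exact isUnit_iff_ne_zero.mpr hPRF
  have hinv : ((RatFunc.X : RF) • toRF E - toRF A)⁻¹
      = (algebraMap ℝ[X] RF P)⁻¹ • (Mp.adjugate.map (algebraMap ℝ[X] RF)) := by
    rw [hMmap, Matrix.inv_def, Ring.inverse_eq_inv, ← RingHom.mapMatrix_apply,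
      ← RingHom.map_det, ← RingHom.map_adjugate, RingHom.mapMatrix_apply, hPdef]
  intro i j
  -- the numerator polynomial
  set Cp : Matrix (Fin p) (Fin n) ℝ[X] := C.map Polynomial.C with hCp
  set Bp : Matrix (Fin n) (Fin m) ℝ[X] := B.map Polynomial.C with hBp
  set q0 : ℝ[X] := (Cp * Mp.adjugate * Bp) i j with hq0
  have hCmap : toRF C = Cp.map (algebraMap ℝ[X] RF) := by
    ext i j
    simp [toRF, hCp, Matrix.map_apply, RatFunc.algebraMap_C, RatFunc.algebraMap_eq_C]
  have hBmap : toRF B = Bp.map (algebraMap ℝ[X] RF) := by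
    ext i j
    simp [toRF, hBp, Matrix.map_apply, RatFunc.algebraMap_C, RatFunc.algebraMap_eq_C]
  have hentry : tfm E A B C D i j
      = algebraMap ℝ[X] RF (q0 + Polynomial.C (D i j) * P) / algebraMap ℝ[X] RF P := by
    rw [tfm, hinv, Matrix.add_apply, hCmap, hBmap, Matrix.mul_smul, Matrix.smul_mul,
      Matrix.smul_apply, ← Matrix.map_mul, ← Matrix.map_mul, Matrix.map_apply, ← hq0,
      smul_eq_mul, map_add, _root_.map_mul]
    have hD : toRF D i j = algebraMap ℝ[X] RF (Polynomial.C (D i j)) := by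
      simp [toRF, Matrix.map_apply, RatFunc.algebraMap_C, RatFunc.algebraMap_eq_C]
    rw [hD]
    field_simp
  rw [hentry]
  -- degree bound on the numerator
  have hq0deg : q0.degree ≤ (E.rank : WithBot ℕ) := by
    rw [hq0]
    rw [Matrix.mul_apply]
    refine (Polynomial.degree_sum_le _ _).trans ?_
    rw [Finset.sup_le_iff]
    intro k _
    refine (Polynomial.degree_mul_le _ _).trans ?_
    have h2 : (Bp k j).degree ≤ 0 := by rw [hBp]; exact Polynomial.degree_C_le
    have h1 : ((Cp * Mp.adjugate) i k).degree ≤ (E.rank : WithBot ℕ) := by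
      rw [Matrix.mul_apply]
      refine (Polynomial.degree_sum_le _ _).trans ?_
      rw [Finset.sup_le_iff]
      intro l _
      refine (Polynomial.degree_mul_le _ _).trans ?_
      have h3 : (Cp i l).degree ≤ 0 := by rw [hCp]; exact Polynomial.degree_C_le
      have h4 := degree_adjugate_le E A l k
      calc (Cp i l).degree + (Mp.adjugate l k).degree ≤ 0 + (E.rank : WithBot ℕ) :=
            add_le_add h3 (by rw [hMp]; exact h4)
        _ = (E.rank : WithBot ℕ) := zero_add _
    calc ((Cp * Mp.adjugate) i k).degree + (Bp k j).degree
        ≤ (E.rank : WithBot ℕ) + 0 := add_le_add h1 h2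
      _ = (E.rank : WithBot ℕ) := add_zero _
  have hnumdeg : (q0 + Polynomial.C (D i j) * P).degree ≤ P.degree := by
    refine (Polynomial.degree_add_le _ _).trans (max_le ?_ ?_)
    · rw [hPdeg]; exact hq0deg
    · refine (Polynomial.degree_mul_le _ _).trans ?_
      calc (Polynomial.C (D i j)).degree + P.degree ≤ 0 + P.degree :=
            add_le_add Polynomial.degree_C_le le_rfl
        _ = P.degree := zero_add _
  exact stable_of_div _ _ hP0 hnumdeg hProots

end
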